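/- arXiv:2006.03414 — 5 statements merged into one kernel-verified Lean document; each statement's English description precedes it below -/
import Mathlib

section
/- Let α, β ∈ ℂ with |α|² + |β|² = 1. Define A₁ = α|e₁⟩⟨e₁| + |e₂⟩⟨e₃|, A₂ = β|e₁⟩⟨e₃| + |e₃⟩⟨e₂|, A₃ = −|e₁⟩⟨e₂| − conj(β)|e₃⟩⟨e₁|, A₄ = |e₂⟩⟨e₁| + conj(α)|e₃⟩⟨e₃| in M₃(ℂ), and Φ_{α,β}(ρ) = (1/2) ∑_{k=1}^4 A_k* ρ A_k. Then Φ_{α,β} has an exact factorization through M₃(ℂ) ⊗ M₂(ℂ): there exists a unitary U ∈ M₃(ℂ) ⊗ M₂(ℂ) such that for all ρ ∈ M₃(ℂ), Φ_{α,β}(ρ) = (I ⊗ Tr)(U*(ρ ⊗ (1/2)I₂)U). (Explicitly, U may be taken as the block matrix with blocks A₁, A₂ in the first row and A₃, A₄ in the second row, i.e. U = ∑_{j,k∈{1,2}} A_{2(j−1)+k} ⊗ |e_j⟩⟨e_k|.) -/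
open Matrix
open scoped Kronecker

set_option maxHeartbeats 4000000
noncomputable section

/-- A map `Φ` on `M_d(ℂ)` has an exact factorization through `M_d(ℂ) ⊗ M_ν(ℂ)` if
there is a unitary `U ∈ M_d(ℂ) ⊗ M_ν(ℂ)` with
`Φ(ρ) = (I ⊗ Tr)(U*(ρ ⊗ (1/ν)I_ν)U)` for all `ρ`, entrywise. -/
def HasExactFactorization (d ν : ℕ)
    (Φ : Matrix (Fin d) (Fin d) ℂ → Matrix (Fin d) (Fin d) ℂ) : Prop :=
  ∃ U : Matrix (Fin d × Fin ν) (Fin d × Fin ν) ℂ,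
    U ∈ Matrix.unitaryGroup (Fin d × Fin ν) ℂ ∧
    ∀ ρ : Matrix (Fin d) (Fin d) ℂ, ∀ i j : Fin d,
      Φ ρ i j =
        ∑ k : Fin ν,
          (Uᴴ * (ρ ⊗ₖ (((1 : ℂ) / ν) • (1 : Matrix (Fin ν) (Fin ν) ℂ))) * U) (i, k) (j, k)

/-- `A₁ = α|e₁⟩⟨e₁| + |e₂⟩⟨e₃|`. -/
def A₁ (α : ℂ) : Matrix (Fin 3) (Fin 3) ℂ := !![α, 0, 0; 0, 0, 1; 0, 0, 0]

/-- `A₂ = β|e₁⟩⟨e₃| + |e₃⟩⟨e₂|`. -/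
def A₂ (β : ℂ) : Matrix (Fin 3) (Fin 3) ℂ := !![0, 0, β; 0, 0, 0; 0, 1, 0]

/-- `A₃ = −|e₁⟩⟨e₂| − conj(β)|e₃⟩⟨e₁|`. -/
def A₃ (β : ℂ) : Matrix (Fin 3) (Fin 3) ℂ :=
  !![0, -1, 0; 0, 0, 0; -(starRingEnd ℂ β), 0, 0]

/-- `A₄ = |e₂⟩⟨e₁| + conj(α)|e₃⟩⟨e₃|`. -/
def A₄ (α : ℂ) : Matrix (Fin 3) (Fin 3) ℂ :=
  !![0, 0, 0; 1, 0, 0; 0, 0, starRingEnd ℂ α]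

/-- `Φ_{α,β}(ρ) = (1/2) ∑_{k=1}^4 A_k* ρ A_k`. -/
def Phi (α β : ℂ) (ρ : Matrix (Fin 3) (Fin 3) ℂ) : Matrix (Fin 3) (Fin 3) ℂ :=
  ((1 : ℂ) / 2) • ((A₁ α)ᴴ * ρ * A₁ α + (A₂ β)ᴴ * ρ * A₂ β + (A₃ β)ᴴ * ρ * A₃ β +
    (A₄ α)ᴴ * ρ * A₄ α)

/-- For every `α, β` with `|α|² + |β|² = 1`, the map `Φ_{α,β}` has an exact
factorization through `M₃(ℂ) ⊗ M₂(ℂ)`. -/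
theorem Phi_hasExactFactorization (α β : ℂ) (hnorm : ‖α‖ ^ 2 + ‖β‖ ^ 2 = 1) :
    HasExactFactorization 3 2 (Phi α β) := by
  have hC : α * starRingEnd ℂ α + β * starRingEnd ℂ β = 1 := by
    rw [Complex.mul_conj, Complex.mul_conj]
    norm_cast
    rw [Complex.normSq_eq_norm_sq, Complex.normSq_eq_norm_sq]
    simpa using hnorm
  have hC' : starRingEnd ℂ α * α + starRingEnd ℂ β * β = 1 := by
    rw [mul_comm, mul_comm (starRingEnd ℂ β)]; exact hC
  refine ⟨Matrix.of fun p q => (!![A₁ α, A₂ β; A₃ β, A₄ α] p.2 q.2) p.1 q.1, ?_, ?_⟩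
  · rw [Matrix.mem_unitaryGroup_iff]
    ext ⟨i, k⟩ ⟨j, l⟩
    fin_cases i <;> fin_cases k <;> fin_cases j <;> fin_cases l <;>
      simp [Matrix.mul_apply, Fintype.sum_prod_type, Fin.sum_univ_succ,
        A₁, A₂, A₃, A₄, Matrix.one_apply, Prod.ext_iff, Fin.ext_iff,
        Matrix.vecHead, Matrix.vecTail] <;>
      (first | linear_combination hC | ring1)
  · intro ρ i j
    fin_cases i <;> fin_cases j <;>
      simp [Phi, Matrix.mul_apply, Fintype.sum_prod_type, Fin.sum_univ_succ,
        A₁, A₂, A₃, A₄, Matrix.one_apply, Matrix.conjTranspose_apply,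
        Matrix.vecHead, Matrix.vecTail] <;>
      ring

end
end

section
/- Let d ≥ 3, let t ∈ (−1,1), and let V₁, …, V_d be arbitrary unitary matrices in M_{d−1}(ℂ). Define A_m = S^{−(m−1)} (t ⊕ V_m) S^{m−1} ∈ M_d(ℂ) for m = 1,…,d. Then each A_m is a normal matrix (A_m A_m* = A_m* A_m), the family {A_m* A_m}_{m=1}^d consists of diagonal matrices and is linearly independent over ℂ, and it spans the subspace of all diagonal matrices in M_d(ℂ). -/
open Matrix

noncomputable section

/-- The cyclic shift matrix `S = ∑_k |e_k⟩⟨e_{k+1}|` (indices mod `d`). -/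
def cyclicShift (d : ℕ) : Matrix (Fin d) (Fin d) ℂ :=
  Matrix.of fun j k => if (k : ℕ) = ((j : ℕ) + 1) % d then 1 else 0

/-- The block-diagonal matrix `t ⊕ V ∈ M_d(ℂ)` with `(1,1)` entry `t` and lower-right
`(d−1)×(d−1)` block `V`. -/
def blockTV (d : ℕ) (t : ℂ) (V : Matrix (Fin (d - 1)) (Fin (d - 1)) ℂ) :
    Matrix (Fin d) (Fin d) ℂ :=
  Matrix.of fun j k =>
    if h : (j : ℕ) = 0 ∨ (k : ℕ) = 0 then
      (if (j : ℕ) = 0 ∧ (k : ℕ) = 0 then t else 0)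
    else V ⟨(j : ℕ) - 1, by have := j.isLt; omega⟩ ⟨(k : ℕ) - 1, by have := k.isLt; omega⟩

/-- `A_m = S^{−(m−1)} (t ⊕ V_m) S^{m−1}`, where `m : Fin d` corresponds to the index
`m+1 ∈ {1,…,d}` (so that the exponent is `(m : ℕ)`). Since `S` is unitary,
`S^{−(m−1)} = (S^{m−1})ᴴ`. -/
def keyA (d : ℕ) (t : ℂ) (V : Fin d → Matrix (Fin (d - 1)) (Fin (d - 1)) ℂ) (m : Fin d) :
    Matrix (Fin d) (Fin d) ℂ :=
  ((cyclicShift d) ^ (m : ℕ))ᴴ * blockTV d t (V m) * (cyclicShift d) ^ (m : ℕ)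

open Fin.NatCast

lemma shift_pow {d : ℕ} (hd : 2 ≤ d) [NeZero d] (m : ℕ) (j k : Fin d) :
    (cyclicShift d ^ m) j k = if k = j + (m : Fin d) then 1 else 0 := by
  induction m generalizing k with
  | zero => simp [Matrix.one_apply, eq_comm]
  | succ n ih =>
    rw [pow_succ, Matrix.mul_apply]
    have h1 : ∀ l w : Fin d, cyclicShift d l w = if w = l + 1 then 1 else 0 := by
      intro l w
      simp only [cyclicShift, Matrix.of_apply]
      congr 1
      rw [Fin.ext_iff, Fin.val_add, Fin.val_one', Nat.mod_eq_of_lt (by omega : 1 < d)]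
    simp only [ih, h1, ite_mul, one_mul, zero_mul]
    rw [Finset.sum_ite_eq' Finset.univ (j + (n : Fin d)) (fun l => if k = l + 1 then 1 else 0)]
    simp [add_assoc]

lemma shift_mul_conj {d : ℕ} (hd : 2 ≤ d) [NeZero d] (m : ℕ) :
    cyclicShift d ^ m * (cyclicShift d ^ m)ᴴ = 1 := by
  ext j k
  rw [Matrix.mul_apply, Matrix.one_apply]
  simp only [Matrix.conjTranspose_apply, shift_pow hd, apply_ite star, star_one, star_zero]
  rw [Finset.sum_eq_single (j + (m : Fin d))]
  · rw [if_pos rfl, one_mul]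
    by_cases h : j = k
    · subst h; simp
    · rw [if_neg (fun hh => h (add_right_cancel hh)), if_neg h]
  · intro b _ hb
    rw [if_neg (fun h : b = j + (m : Fin d) => hb h), zero_mul]
  · simp

lemma conj_mul_diag_mul {d : ℕ} (hd : 2 ≤ d) [NeZero d] (m : ℕ) (D : Fin d → ℂ) :
    (cyclicShift d ^ m)ᴴ * Matrix.diagonal D * cyclicShift d ^ m
      = Matrix.diagonal (fun j => D (j - (m : Fin d))) := by
  ext j k
  rw [Matrix.mul_apply]
  simp only [Matrix.mul_diagonal, Matrix.conjTranspose_apply, shift_pow hd, apply_ite star,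
    star_one, star_zero, Matrix.diagonal_apply]
  rw [Finset.sum_eq_single (j - (m : Fin d))]
  · rw [if_pos (by rw [sub_add_cancel]), one_mul]
    by_cases h : j = k
    · subst h; rw [if_pos (by rw [sub_add_cancel]), if_pos rfl, mul_one]
    · rw [if_neg (by rw [sub_add_cancel]; exact fun hh => h hh.symm), if_neg h, mul_zero]
  · intro b _ hb
    rw [if_neg (fun h : j = b + (m : Fin d) => hb (by rw [h, add_sub_cancel_right])),
      zero_mul, zero_mul]
  · simp

lemma blockTV_zero_zero {e : ℕ} (t : ℂ) (V : Matrix (Fin e) (Fin e) ℂ) :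
    blockTV (e+1) t V 0 0 = t := by simp [blockTV]

lemma blockTV_zero_succ {e : ℕ} (t : ℂ) (V : Matrix (Fin e) (Fin e) ℂ) (b : Fin e) :
    blockTV (e+1) t V 0 b.succ = 0 := by simp [blockTV, Fin.val_succ]

lemma blockTV_succ_zero {e : ℕ} (t : ℂ) (V : Matrix (Fin e) (Fin e) ℂ) (a : Fin e) :
    blockTV (e+1) t V a.succ 0 = 0 := by simp [blockTV, Fin.val_succ]

lemma blockTV_succ_succ {e : ℕ} (t : ℂ) (V : Matrix (Fin e) (Fin e) ℂ) (a b : Fin e) :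
    blockTV (e+1) t V a.succ b.succ = V a b := by
  simp only [blockTV, Matrix.of_apply, Fin.val_succ]
  rw [dif_neg (by omega)]
  congr 1 <;> exact Fin.ext (by simp)

lemma blockTV_conjT_mul {e : ℕ} (t : ℝ) (V : Matrix (Fin e) (Fin e) ℂ)
    (hV : Vᴴ * V = 1) :
    (blockTV (e+1) (t:ℂ) V)ᴴ * blockTV (e+1) (t:ℂ) V
      = Matrix.diagonal (fun j : Fin (e+1) => if j = 0 then (t:ℂ)^2 else 1) := by
  ext j k
  rw [Matrix.mul_apply, Fin.sum_univ_succ]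
  simp only [Matrix.conjTranspose_apply]
  induction j using Fin.cases with
  | zero =>
    induction k using Fin.cases with
    | zero =>
      simp [blockTV_zero_zero, blockTV_succ_zero, Complex.conj_ofReal, pow_two]
    | succ b =>
      simp [blockTV_zero_succ, blockTV_succ_zero, Matrix.diagonal_apply,
        (Fin.succ_ne_zero b).symm]
  | succ a =>
    induction k using Fin.cases with
    | zero =>
      simp [blockTV_zero_zero, blockTV_succ_zero, blockTV_zero_succ, Matrix.diagonal_apply,
        Fin.succ_ne_zero a]
    | succ b =>
      have h1 : (Vᴴ * V) a b = ∑ x, star (V x a) * V x b := by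
        simp [Matrix.mul_apply, Matrix.conjTranspose_apply]
      rw [hV] at h1
      simp only [blockTV_zero_succ, blockTV_succ_succ, star_zero, zero_mul, zero_add]
      rw [← h1, Matrix.one_apply, Matrix.diagonal_apply]
      simp [Fin.succ_ne_zero, Fin.succ_inj]

lemma blockTV_mul_conjT {e : ℕ} (t : ℝ) (V : Matrix (Fin e) (Fin e) ℂ)
    (hV : V * Vᴴ = 1) :
    blockTV (e+1) (t:ℂ) V * (blockTV (e+1) (t:ℂ) V)ᴴ
      = Matrix.diagonal (fun j : Fin (e+1) => if j = 0 then (t:ℂ)^2 else 1) := by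
  ext j k
  rw [Matrix.mul_apply, Fin.sum_univ_succ]
  simp only [Matrix.conjTranspose_apply]
  induction j using Fin.cases with
  | zero =>
    induction k using Fin.cases with
    | zero =>
      simp [blockTV_zero_zero, blockTV_zero_succ, Complex.conj_ofReal, pow_two]
    | succ b =>
      simp [blockTV_zero_succ, blockTV_succ_zero, Matrix.diagonal_apply,
        (Fin.succ_ne_zero b).symm]
  | succ a =>
    induction k using Fin.cases with
    | zero =>
      simp [blockTV_zero_zero, blockTV_succ_zero, blockTV_zero_succ, Matrix.diagonal_apply,
        Fin.succ_ne_zero a]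
    | succ b =>
      have h1 : (V * Vᴴ) a b = ∑ x, V a x * star (V b x) := by
        simp [Matrix.mul_apply, Matrix.conjTranspose_apply]
      rw [hV] at h1
      simp only [blockTV_succ_zero, blockTV_succ_succ, star_zero, mul_zero, zero_add]
      rw [← h1, Matrix.one_apply, Matrix.diagonal_apply]
      simp [Fin.succ_ne_zero, Fin.succ_inj]

lemma blockTV_conjT_mul' {d : ℕ} (hd : 1 ≤ d) [NeZero d] (t : ℝ)
    (V : Matrix (Fin (d-1)) (Fin (d-1)) ℂ) (hV : Vᴴ * V = 1) :
    (blockTV d (t:ℂ) V)ᴴ * blockTV d (t:ℂ) V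
      = Matrix.diagonal (fun j : Fin d => if j = 0 then (t:ℂ)^2 else 1) := by
  obtain ⟨e, rfl⟩ : ∃ e, d = e + 1 := ⟨d-1, by omega⟩
  exact blockTV_conjT_mul t V hV

lemma blockTV_mul_conjT' {d : ℕ} (hd : 1 ≤ d) [NeZero d] (t : ℝ)
    (V : Matrix (Fin (d-1)) (Fin (d-1)) ℂ) (hV : V * Vᴴ = 1) :
    blockTV d (t:ℂ) V * (blockTV d (t:ℂ) V)ᴴ
      = Matrix.diagonal (fun j : Fin d => if j = 0 then (t:ℂ)^2 else 1) := by
  obtain ⟨e, rfl⟩ : ∃ e, d = e + 1 := ⟨d-1, by omega⟩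
  exact blockTV_mul_conjT t V hV

lemma sandwich1 {n : ℕ} (X B : Matrix (Fin n) (Fin n) ℂ) (hX : X * Xᴴ = 1) :
    (Xᴴ * B * X)ᴴ * (Xᴴ * B * X) = Xᴴ * (Bᴴ * B) * X := by
  simp only [Matrix.conjTranspose_mul, Matrix.conjTranspose_conjTranspose]
  simp only [mul_assoc]
  rw [← mul_assoc X Xᴴ, hX, one_mul]

lemma sandwich2 {n : ℕ} (X B : Matrix (Fin n) (Fin n) ℂ) (hX : X * Xᴴ = 1) :
    (Xᴴ * B * X) * (Xᴴ * B * X)ᴴ = Xᴴ * (B * Bᴴ) * X := by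
  simp only [Matrix.conjTranspose_mul, Matrix.conjTranspose_conjTranspose]
  simp only [mul_assoc]
  rw [← mul_assoc X Xᴴ, hX, one_mul]


/-- For `d ≥ 3`, `t ∈ (−1,1)` and arbitrary unitaries `V₁,…,V_d ∈ M_{d−1}(ℂ)`, each
`A_m = S^{−(m−1)}(t ⊕ V_m)S^{m−1}` is normal, the family `{A_m* A_m}` consists of diagonal
matrices, is linearly independent, and spans the diagonal matrices in `M_d(ℂ)`. -/
theorem keyA_normal_diag_linearIndependent_span (d : ℕ) (hd : 3 ≤ d) (t : ℝ)
    (ht : t ∈ Set.Ioo (-1 : ℝ) 1)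
    (V : Fin d → Matrix (Fin (d - 1)) (Fin (d - 1)) ℂ)
    (hV : ∀ m, V m ∈ Matrix.unitaryGroup (Fin (d - 1)) ℂ) :
    (∀ m, keyA d (t : ℂ) V m * (keyA d (t : ℂ) V m)ᴴ
        = (keyA d (t : ℂ) V m)ᴴ * keyA d (t : ℂ) V m) ∧
    (∀ m, ((keyA d (t : ℂ) V m)ᴴ * keyA d (t : ℂ) V m).IsDiag) ∧
    LinearIndependent ℂ (fun m : Fin d => (keyA d (t : ℂ) V m)ᴴ * keyA d (t : ℂ) V m) ∧
    (∀ M : Matrix (Fin d) (Fin d) ℂ, M.IsDiag →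
      M ∈ Submodule.span ℂ
        (Set.range fun m : Fin d => (keyA d (t : ℂ) V m)ᴴ * keyA d (t : ℂ) V m)) := by
  obtain ⟨e, rfl⟩ : ∃ e, d = e + 1 := ⟨d - 1, by omega⟩
  haveI : NeZero (e + 1) := ⟨by omega⟩
  have hd2 : 2 ≤ e + 1 := by omega
  -- unitarity facts
  have hVu1 : ∀ m, (V m)ᴴ * V m = 1 := fun m => by
    have := Matrix.mem_unitaryGroup_iff'.mp (hV m)
    rwa [Matrix.star_eq_conjTranspose] at this
  have hVu2 : ∀ m, V m * (V m)ᴴ = 1 := fun m => by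
    have := Matrix.mem_unitaryGroup_iff.mp (hV m)
    rwa [Matrix.star_eq_conjTranspose] at this
  have hdiagshift : ∀ m : Fin (e+1),
      (Matrix.diagonal (fun j : Fin (e+1) =>
        (fun j : Fin (e+1) => if j = 0 then (t:ℂ)^2 else 1) (j - ((m : ℕ) : Fin (e+1)))))
      = Matrix.diagonal (fun j => if j = m then (t:ℂ)^2 else 1) := by
    intro m
    congr 1
    funext j
    rw [Fin.cast_val_eq_self]
    simp only [sub_eq_zero]
  have key1 : ∀ m, (keyA (e+1) (t : ℂ) V m)ᴴ * keyA (e+1) (t : ℂ) V m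
      = Matrix.diagonal (fun j => if j = m then (t:ℂ)^2 else 1) := by
    intro m
    unfold keyA
    rw [sandwich1 _ _ (shift_mul_conj hd2 (m:ℕ)), blockTV_conjT_mul' (by omega) t (V m) (hVu1 m),
      conj_mul_diag_mul hd2, hdiagshift]
  have key2 : ∀ m, keyA (e+1) (t : ℂ) V m * (keyA (e+1) (t : ℂ) V m)ᴴ
      = Matrix.diagonal (fun j => if j = m then (t:ℂ)^2 else 1) := by
    intro m
    unfold keyA
    rw [sandwich2 _ _ (shift_mul_conj hd2 (m:ℕ)), blockTV_mul_conjT' (by omega) t (V m) (hVu2 m),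
      conj_mul_diag_mul hd2, hdiagshift]
  have hc1 : ((t:ℂ)^2 - 1) ≠ 0 := by
    have h : ((t:ℂ)^2 - 1) = ((t^2 - 1 : ℝ) : ℂ) := by push_cast; ring
    rw [h]
    exact_mod_cast (by nlinarith [ht.1, ht.2] : (t^2 - 1 : ℝ) ≠ 0)
  have hne : ((t:ℂ)^2 - 1 + ((e+1 : ℕ) : ℂ)) ≠ 0 := by
    have h : ((t:ℂ)^2 - 1 + ((e+1:ℕ):ℂ)) = ((t^2 - 1 + (e+1:ℕ) : ℝ) : ℂ) := by push_cast; ring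
    rw [h]
    have he2 : (2:ℝ) ≤ (e:ℝ) := by exact_mod_cast (by omega : 2 ≤ e)
    exact_mod_cast (by push_cast; nlinarith [sq_nonneg t, he2] : (t^2 - 1 + ((e+1:ℕ):ℝ)) ≠ 0)
  have hsumdiag : ∀ (a : Fin (e+1) → ℂ) (i : Fin (e+1)),
      (∑ m, a m • Matrix.diagonal (fun j => if j = m then (t:ℂ)^2 else 1)) i i
        = (∑ m, a m) + a i * ((t:ℂ)^2 - 1) := by
    intro a i
    rw [Matrix.sum_apply]
    simp only [Matrix.smul_apply, Matrix.diagonal_apply_eq, smul_eq_mul]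
    have h : ∀ m : Fin (e+1), a m * (if i = m then (t:ℂ)^2 else 1)
        = a m + (if m = i then a m * ((t:ℂ)^2 - 1) else 0) := by
      intro m
      by_cases hmi : i = m
      · subst hmi; simp; ring
      · rw [if_neg hmi, if_neg (fun hh => hmi hh.symm)]; ring
    simp only [h]
    rw [Finset.sum_add_distrib,
      Finset.sum_ite_eq' Finset.univ i (fun m => a m * ((t:ℂ)^2-1))]
    simp
  have hsumoff : ∀ (a : Fin (e+1) → ℂ) (i j : Fin (e+1)), i ≠ j →
      (∑ m, a m • Matrix.diagonal (fun k => if k = m then (t:ℂ)^2 else 1)) i j = 0 := by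
    intro a i j hij
    rw [Matrix.sum_apply]
    refine Finset.sum_eq_zero fun m _ => ?_
    rw [Matrix.smul_apply, Matrix.diagonal_apply_ne _ hij, smul_zero]
  have hfun : (fun m : Fin (e+1) => (keyA (e+1) (t:ℂ) V m)ᴴ * keyA (e+1) (t:ℂ) V m)
      = fun m => Matrix.diagonal (fun j => if j = m then (t:ℂ)^2 else 1) := funext key1
  refine ⟨fun m => by rw [key1 m, key2 m],
    fun m => by rw [key1 m]; exact Matrix.isDiag_diagonal _, ?_, ?_⟩
  · rw [hfun, Fintype.linearIndependent_iff]
    intro a ha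
    have hrow : ∀ i, (∑ m, a m) + a i * ((t:ℂ)^2 - 1) = 0 := by
      intro i
      rw [← hsumdiag a i, ha]
      simp
    have hs : (∑ m, a m) = 0 := by
      have h2 : ∑ i : Fin (e+1), ((∑ m, a m) + a i * ((t:ℂ)^2-1)) = 0 :=
        Finset.sum_eq_zero fun i _ => hrow i
      rw [Finset.sum_add_distrib, Finset.sum_const, Finset.card_univ, Fintype.card_fin,
        ← Finset.sum_mul, nsmul_eq_mul] at h2
      have h3 : (∑ m, a m) * (((e+1:ℕ):ℂ) + ((t:ℂ)^2 - 1)) = 0 := by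
        linear_combination h2
      rcases mul_eq_zero.mp h3 with h | h
      · exact h
      · exact absurd (by linear_combination h) hne
    intro i
    have h4 := hrow i
    rw [hs, zero_add] at h4
    exact (mul_eq_zero.mp h4).resolve_right hc1
  · intro M hM
    have hT : (∑ j, M j j)
        = ((∑ j, M j j) / ((t:ℂ)^2 - 1 + ((e+1:ℕ):ℂ))) * ((t:ℂ)^2 - 1 + ((e+1:ℕ):ℂ)) :=
      (div_mul_cancel₀ _ hne).symm
    set sv : ℂ := (∑ j, M j j) / ((t:ℂ)^2 - 1 + ((e+1:ℕ):ℂ)) with hsv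
    set a : Fin (e+1) → ℂ := fun m => (M m m - sv) / ((t:ℂ)^2 - 1) with ha
    have hsum_a : ∑ m, a m = sv := by
      rw [ha]
      rw [← Finset.sum_div, div_eq_iff hc1, Finset.sum_sub_distrib, Finset.sum_const,
        Finset.card_univ, Fintype.card_fin, nsmul_eq_mul]
      rw [hT]
      ring
    have hrep : M = ∑ m, a m • Matrix.diagonal
        (fun j => if j = m then (t:ℂ)^2 else 1) := by
      ext i j
      by_cases hij : i = j
      · subst hij
        rw [hsumdiag a i, hsum_a]
        have : a i * ((t:ℂ)^2 - 1) = M i i - sv := by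
          rw [ha]; exact div_mul_cancel₀ _ hc1
        rw [this]
        ring
      · rw [hsumoff a i j hij]
        exact hM hij
    have hrep2 : M = ∑ m, a m • ((keyA (e+1) (t:ℂ) V m)ᴴ * keyA (e+1) (t:ℂ) V m) := by
      rw [hrep]
      simp only [key1]
    rw [hrep2]
    exact Submodule.sum_mem _ fun m _ =>
      Submodule.smul_mem _ _ (Submodule.subset_span ⟨m, rfl⟩)


end
end

section
/- Let d ≥ 3 and let V₁, …, V_d be unitary matrices in M_{d−1}(ℂ) each of band width β(V_m) < (d−1)/4. Then for every t ∈ [−1,1], the family {A_m* A_n}_{m,n=1}^d of matrices A_m = S^{−(m−1)}(t ⊕ V_m)S^{m−1} ∈ M_d(ℂ) is NOT linearly independent over ℂ. -/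
open Matrix

noncomputable section

/-- The band width `β(B) = max{|j−k| : b_{jk} ≠ 0}` of a matrix (with `β = 0` for the
zero matrix). -/
def bandWidth {n : ℕ} (B : Matrix (Fin n) (Fin n) ℂ) : ℕ :=
  sSup {r : ℕ | ∃ j k : Fin n, B j k ≠ 0 ∧ r = Nat.dist (j : ℕ) (k : ℕ)}

lemma mod_two_cases (x d : ℕ) (h : x < 2*d) : x % d = if x < d then x else x - d := by
  split
  · exact Nat.mod_eq_of_lt ‹_›
  · rw [Nat.mod_eq_sub_mod (by omega)]
    exact Nat.mod_eq_of_lt (by omega)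

lemma key_index (d : ℕ) {a l m : ℕ} (ha : a < d) (hl : l < d) (hm : m < d) :
    l = (a + m) % d ↔ a = (l + (d - m)) % d := by
  rw [mod_two_cases (a+m) d (by omega), mod_two_cases (l+(d-m)) d (by omega)]
  split <;> split <;> omega

lemma cdist_tri {d a b c : ℕ} (ha : a < d) (hb : b < d) (hc : c < d) :
    min (Nat.dist a b) (d - Nat.dist a b) ≤
      min (Nat.dist a c) (d - Nat.dist a c) + min (Nat.dist c b) (d - Nat.dist c b) := by
  simp only [Nat.dist]
  omega

lemma cyclicShift_pow_apply (d p : ℕ) (j k : Fin d) :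
    ((cyclicShift d) ^ p) j k = if (k : ℕ) = ((j : ℕ) + p) % d then 1 else 0 := by
  induction p generalizing k with
  | zero =>
    simp only [pow_zero, Matrix.one_apply, Nat.add_zero, Nat.mod_eq_of_lt j.isLt]
    congr 1
    simp [eq_comm, Fin.ext_iff]
  | succ p ih =>
    rw [pow_succ, Matrix.mul_apply]
    rw [Finset.sum_eq_single (⟨((j : ℕ) + p) % d, Nat.mod_lt _ j.pos⟩ : Fin d)]
    · rw [ih, if_pos rfl, one_mul]
      simp only [cyclicShift, Matrix.of_apply]
      congr 1
      rw [Nat.mod_add_mod, ← Nat.add_assoc]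
    · intro b _ hb
      rw [ih, if_neg, zero_mul]
      intro h
      exact hb (Fin.ext h)
    · intro h
      exact absurd (Finset.mem_univ _) h

lemma keyA_apply (d : ℕ) (t : ℂ) (V : Fin d → Matrix (Fin (d - 1)) (Fin (d - 1)) ℂ)
    (m l j : Fin d) :
    keyA d t V m l j =
      blockTV d t (V m) ⟨((l : ℕ) + (d - (m : ℕ))) % d, Nat.mod_lt _ l.pos⟩
        ⟨((j : ℕ) + (d - (m : ℕ))) % d, Nat.mod_lt _ j.pos⟩ := by
  have hSH : ∀ a b : Fin d, ((cyclicShift d ^ (m : ℕ))ᴴ) a b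
      = if (a : ℕ) = ((b : ℕ) + (m : ℕ)) % d then 1 else 0 := by
    intro a b
    rw [Matrix.conjTranspose_apply, cyclicShift_pow_apply]
    split <;> simp
  unfold keyA
  rw [Matrix.mul_apply]
  rw [Finset.sum_eq_single (⟨((j : ℕ) + (d - (m : ℕ))) % d, Nat.mod_lt _ j.pos⟩ : Fin d)]
  · rw [cyclicShift_pow_apply,
      if_pos ((key_index d (Nat.mod_lt _ j.pos) j.isLt m.isLt).mpr rfl), mul_one,
      Matrix.mul_apply]
    rw [Finset.sum_eq_single (⟨((l : ℕ) + (d - (m : ℕ))) % d, Nat.mod_lt _ l.pos⟩ : Fin d)]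
    · rw [hSH, if_pos ((key_index d (Nat.mod_lt _ l.pos) l.isLt m.isLt).mpr rfl), one_mul]
    · intro a _ ha
      rw [hSH, if_neg, zero_mul]
      intro h
      exact ha (Fin.ext ((key_index d a.isLt l.isLt m.isLt).mp h))
    · intro h
      exact absurd (Finset.mem_univ _) h
  · intro b _ hb
    rw [cyclicShift_pow_apply, if_neg, mul_zero]
    intro h
    exact hb (Fin.ext ((key_index d b.isLt j.isLt m.isLt).mp h))
  · intro h
    exact absurd (Finset.mem_univ _) h

lemma dist_le_bandWidth {n : ℕ} {B : Matrix (Fin n) (Fin n) ℂ} {j k : Fin n}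
    (h : B j k ≠ 0) : Nat.dist (j : ℕ) (k : ℕ) ≤ bandWidth B := by
  apply le_csSup
  · refine ⟨n, fun r hr => ?_⟩
    obtain ⟨j', k', _, rfl⟩ := hr
    have := j'.isLt
    have := k'.isLt
    simp only [Nat.dist]
    omega
  · exact ⟨j, k, h, rfl⟩

lemma blockTV_support {d : ℕ} {t : ℂ} {V : Matrix (Fin (d - 1)) (Fin (d - 1)) ℂ}
    {a b : Fin d} (h : blockTV d t V a b ≠ 0) :
    a = b ∨ ((a : ℕ) ≠ 0 ∧ (b : ℕ) ≠ 0 ∧ Nat.dist (a : ℕ) (b : ℕ) ≤ bandWidth V) := by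
  by_cases hz : (a : ℕ) = 0 ∨ (b : ℕ) = 0
  · left
    simp only [blockTV, Matrix.of_apply, dif_pos hz] at h
    have : (a : ℕ) = 0 ∧ (b : ℕ) = 0 := by
      by_contra hc
      exact h (if_neg hc)
    exact Fin.ext (this.1.trans this.2.symm)
  · right
    push_neg at hz
    simp only [blockTV, Matrix.of_apply, dif_neg (not_or.mpr ⟨hz.1, hz.2⟩)] at h
    refine ⟨hz.1, hz.2, ?_⟩
    have := dist_le_bandWidth h
    simp only [Nat.dist] at this ⊢
    omega

lemma keyA_support (d : ℕ) (t : ℂ) (V : Fin d → Matrix (Fin (d - 1)) (Fin (d - 1)) ℂ)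
    (m : Fin d) {l j : Fin d} (h : keyA d t V m l j ≠ 0) :
    min (Nat.dist (l : ℕ) (j : ℕ)) (d - Nat.dist (l : ℕ) (j : ℕ)) ≤ bandWidth (V m) := by
  rw [keyA_apply] at h
  have hl := l.isLt; have hj := j.isLt; have hm := m.isLt
  rcases blockTV_support h with heq | ⟨_, _, hle⟩
  · have hv : ((l : ℕ) + (d - (m : ℕ))) % d = ((j : ℕ) + (d - (m : ℕ))) % d :=
      congrArg Fin.val heq
    rw [mod_two_cases _ d (by omega), mod_two_cases _ d (by omega)] at hv
    have : (l : ℕ) = (j : ℕ) := by split at hv <;> split at hv <;> omega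
    simp only [Nat.dist, this]
    omega
  · refine le_trans ?_ hle
    simp only at hle ⊢
    rw [mod_two_cases _ d (by omega), mod_two_cases _ d (by omega)]
    simp only [Nat.dist]
    split <;> split <;> omega

lemma prod_support (d : ℕ) (t : ℂ) (V : Fin d → Matrix (Fin (d - 1)) (Fin (d - 1)) ℂ)
    (m n : Fin d) {j k : Fin d}
    (h : ((keyA d t V m)ᴴ * keyA d t V n) j k ≠ 0) :
    min (Nat.dist (j : ℕ) (k : ℕ)) (d - Nat.dist (j : ℕ) (k : ℕ)) ≤
      bandWidth (V m) + bandWidth (V n) := by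
  rw [Matrix.mul_apply] at h
  obtain ⟨l, hl⟩ : ∃ l, (keyA d t V m)ᴴ j l * keyA d t V n l k ≠ 0 := by
    by_contra hc
    push_neg at hc
    exact h (Finset.sum_eq_zero fun l _ => hc l)
  have h1 : keyA d t V m l j ≠ 0 := by
    intro hz
    apply hl
    rw [Matrix.conjTranspose_apply, hz, star_zero, zero_mul]
  have h2 : keyA d t V n l k ≠ 0 := by
    intro hz
    apply hl
    rw [hz, mul_zero]
  have b1 := keyA_support d t V m h1
  have b2 := keyA_support d t V n h2
  refine le_trans (cdist_tri j.isLt k.isLt l.isLt) ?_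
  rw [Nat.dist_comm (j : ℕ) (l : ℕ)]
  exact Nat.add_le_add b1 b2

/-- If `V₁,…,V_d` are unitaries in `M_{d−1}(ℂ)` with band width `β(V_m) < (d−1)/4`, then
for every `t ∈ [−1,1]` the family `{A_m* A_n}` is not linearly independent. -/
theorem bandWidth_small_not_linearIndependent (d : ℕ) (hd : 3 ≤ d)
    (V : Fin d → Matrix (Fin (d - 1)) (Fin (d - 1)) ℂ)
    (hV : ∀ m, V m ∈ Matrix.unitaryGroup (Fin (d - 1)) ℂ)
    (hband : ∀ m, (bandWidth (V m) : ℝ) < ((d : ℝ) - 1) / 4) :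
    ∀ t ∈ Set.Icc (-1 : ℝ) 1,
      ¬ LinearIndependent ℂ
        (fun p : Fin d × Fin d => (keyA d (t : ℂ) V p.1)ᴴ * keyA d (t : ℂ) V p.2) := by
  intro t _ hLI
  set f : Fin d × Fin d → Matrix (Fin d) (Fin d) ℂ :=
    fun p => (keyA d (t : ℂ) V p.1)ᴴ * keyA d (t : ℂ) V p.2 with hf
  -- integer band bound
  have hb : ∀ m, 4 * bandWidth (V m) < d - 1 := by
    intro m
    have h := hband m
    have h1 : (4 * bandWidth (V m) : ℝ) < (d : ℝ) - 1 := by linarith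
    have h2 : ((d : ℝ) - 1) = ((d - 1 : ℕ) : ℝ) := by
      rw [Nat.cast_sub (by omega)]
      norm_num
    rw [h2] at h1
    exact_mod_cast h1
  -- the support band
  set S : Finset (Fin d × Fin d) := Finset.univ.filter
    (fun q : Fin d × Fin d =>
      2 * min (Nat.dist (q.1 : ℕ) (q.2 : ℕ)) (d - Nat.dist (q.1 : ℕ) (q.2 : ℕ)) < d - 1)
    with hS
  have hsupp : ∀ p q : Fin d × Fin d, q ∉ S → f p q.1 q.2 = 0 := by
    intro p q hq
    by_contra hne
    apply hq
    rw [hS, Finset.mem_filter]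
    refine ⟨Finset.mem_univ _, ?_⟩
    have := prod_support d (t : ℂ) V p.1 p.2 hne
    have b1 := hb p.1
    have b2 := hb p.2
    omega
  -- S is a proper subset
  have hnot : ((⟨0, by omega⟩ : Fin d), (⟨d / 2, by omega⟩ : Fin d)) ∉ S := by
    rw [hS, Finset.mem_filter]
    intro hmem
    have := hmem.2
    simp only [Nat.dist] at this
    omega
  have hScard : S.card < d * d := by
    have h1 : S ⊂ Finset.univ := by
      refine Finset.ssubset_univ_iff.mpr ?_
      intro he
      exact hnot (he ▸ Finset.mem_univ _)
    calc S.card < Finset.univ.card := Finset.card_lt_card h1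
    _ = d * d := by simp [Finset.card_univ]
  -- every f p is in the span of std basis matrices indexed by S
  set E : Fin d × Fin d → Matrix (Fin d) (Fin d) ℂ :=
    fun s => Matrix.single s.1 s.2 (1 : ℂ) with hE
  have hmem : ∀ p, f p ∈ Submodule.span ℂ (↑(S.image E) : Set (Matrix (Fin d) (Fin d) ℂ)) := by
    intro p
    have hrepr : f p = ∑ s ∈ S, f p s.1 s.2 • E s := by
      ext j k
      rw [Matrix.sum_apply]
      have : ∀ s ∈ S, (f p s.1 s.2 • E s) j k
          = if (j, k) = s then f p (j, k).1 (j, k).2 else 0 := by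
        intro s _
        simp only [hE, Matrix.smul_apply, Matrix.single, Matrix.of_apply, smul_eq_mul]
        by_cases hjk : (j, k) = s
        · subst hjk
          simp
        · rw [if_neg, mul_zero, if_neg hjk]
          intro hc
          exact hjk (Prod.ext hc.1.symm hc.2.symm)
      rw [Finset.sum_congr rfl this, Finset.sum_ite_eq]
      split
      · rfl
      · exact hsupp p (j, k) ‹_›
    rw [hrepr]
    exact Submodule.sum_mem _ fun s hs => Submodule.smul_mem _ _
      (Submodule.subset_span (Finset.mem_coe.mpr (Finset.mem_image_of_mem E hs)))
  -- a linearly independent family of size d*d inside a span of < d*d vectors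
  have hcard := linearIndependent_le_span' f hLI (↑(S.image E)) (by
    rintro x ⟨p, rfl⟩
    exact hmem p)
  rw [Cardinal.mk_fintype] at hcard
  simp only [Finset.coe_sort_coe, Fintype.card_prod, Fintype.card_fin, Fintype.card_coe, Nat.cast_le] at hcard
  have := Finset.card_image_le (s := S) (f := E)
  omega

end
end

section
/- Let d ≥ 3 and ε ∈ {+1, −1}. For real x and indices 1 ≤ m < n ≤ d define the matrix X^ε_{mn}(x) ∈ M_d(ℂ) with entries: x at position (m,n); εx at (n,m); 1 at positions (m,j) and (j,n) for every j ∉ {m,n}; ε at positions (j,m) and (n,j) for every j ∉ {m,n}; and 0 elsewhere. Let Ω^ε_d(0) be the matrix indexed by the set P = {(m,n) : 1 ≤ m < n ≤ d} whose entry in row (m,n) and column (j,k) equals: 0 if (j,k) = (m,n); 1 if j = m and k ≠ n; ε if k = m; 1 if k = n and j ≠ m; ε if j = n; and 0 otherwise. Then for every w ∈ ℝ, the family {X^ε_{mn}(w)}_{1 ≤ m < n ≤ d} is linearly independent over ℂ if and only if −w is not an eigenvalue of Ω^ε_d(0). -/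
open Matrix

noncomputable section

/-- The matrix `X^ε_{mn}(x) ∈ M_d(ℂ)`: entry `x` at `(m,n)`, `εx` at `(n,m)`, `1` at
`(m,j)` and `(j,n)` for `j ∉ {m,n}`, `ε` at `(j,m)` and `(n,j)` for `j ∉ {m,n}`, `0`
elsewhere. -/
def Xmat (d : ℕ) (ε : ℝ) (x : ℝ) (m n : Fin d) : Matrix (Fin d) (Fin d) ℂ :=
  Matrix.of fun j k =>
    if j = m ∧ k = n then (x : ℂ)
    else if j = n ∧ k = m then ((ε * x : ℝ) : ℂ)
    else if (j = m ∧ k ≠ n ∧ k ≠ m) ∨ (k = n ∧ j ≠ m ∧ j ≠ n) then 1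
    else if (k = m ∧ j ≠ n ∧ j ≠ m) ∨ (j = n ∧ k ≠ m ∧ k ≠ n) then (ε : ℂ)
    else 0

/-- The index set `P = {(m,n) : 1 ≤ m < n ≤ d}`. -/
abbrev PairIdx (d : ℕ) := {p : Fin d × Fin d // p.1 < p.2}

/-- The matrix `Ω^ε_d(0)`, indexed by `P = {(m,n) : m < n}`: its entry in row `(m,n)`
and column `(j,k)` is `0` if `(j,k) = (m,n)`; `1` if `j = m` and `k ≠ n`; `ε` if
`k = m`; `1` if `k = n` and `j ≠ m`; `ε` if `j = n`; and `0` otherwise. -/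
def Omega (d : ℕ) (ε : ℝ) : Matrix (PairIdx d) (PairIdx d) ℂ :=
  Matrix.of fun r c =>
    if c.1.1 = r.1.1 ∧ c.1.2 = r.1.2 then 0
    else if c.1.1 = r.1.1 ∧ c.1.2 ≠ r.1.2 then 1
    else if c.1.2 = r.1.1 then (ε : ℂ)
    else if c.1.2 = r.1.2 ∧ c.1.1 ≠ r.1.1 then 1
    else if c.1.1 = r.1.2 then (ε : ℂ)
    else 0

lemma Xmat_entry_eq (d : ℕ) (ε w : ℝ) (a b m n : Fin d) (hab : a < b) (hmn : m < n) :
    Xmat d ε w m n a b =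
      Omega d ε ⟨(a,b), hab⟩ ⟨(m,n), hmn⟩ + (w : ℂ) * (if a = m ∧ b = n then 1 else 0) := by
  simp only [Xmat, Omega, Matrix.of_apply]
  split_ifs
  any_goals ring
  all_goals exfalso
  all_goals simp only [Fin.ext_iff, ne_eq, Fin.lt_def, not_and, not_or] at *
  all_goals omega

lemma Xmat_lower (d : ℕ) (ε : ℝ) (hε : ε = 1 ∨ ε = -1) (w : ℝ) (a b m n : Fin d)
    (hab : a < b) (hmn : m < n) :
    Xmat d ε w m n b a = (ε : ℂ) * Xmat d ε w m n a b := by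
  simp only [Xmat, Matrix.of_apply]
  split_ifs
  any_goals (rcases hε with h | h <;> subst h <;> push_cast <;> ring)
  all_goals exfalso
  all_goals simp only [Fin.ext_iff, ne_eq, Fin.lt_def, not_and, not_or] at *
  all_goals omega

lemma Xmat_diag (d : ℕ) (ε w : ℝ) (m n j : Fin d) (hmn : m < n) :
    Xmat d ε w m n j j = 0 := by
  simp only [Xmat, Matrix.of_apply]
  split_ifs
  any_goals rfl
  all_goals exfalso
  all_goals simp only [Fin.ext_iff, ne_eq, Fin.lt_def, not_and, not_or] at *
  all_goals omega

/-- For `d ≥ 3`, `ε ∈ {1,−1}` and any `w ∈ ℝ`: the family `{X^ε_{mn}(w)}_{m<n}` is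
linearly independent over `ℂ` iff `−w` is not an eigenvalue of `Ω^ε_d(0)`. -/
theorem Xmat_linearIndependent_iff_not_eigenvalue (d : ℕ) (hd : 3 ≤ d) (ε : ℝ)
    (hε : ε = 1 ∨ ε = -1) (w : ℝ) :
    LinearIndependent ℂ (fun p : PairIdx d => Xmat d ε w p.1.1 p.1.2) ↔
      Matrix.det (Omega d ε - ((-w : ℝ) : ℂ) • (1 : Matrix (PairIdx d) (PairIdx d) ℂ))
        ≠ 0 := by
  set M : Matrix (PairIdx d) (PairIdx d) ℂ :=
    Omega d ε - ((-w : ℝ) : ℂ) • (1 : Matrix (PairIdx d) (PairIdx d) ℂ) with hMdef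
  have hMentry : ∀ q p : PairIdx d,
      M q p = Omega d ε q p + (w : ℂ) * (if q = p then 1 else 0) := by
    intro q p
    simp only [hMdef, Matrix.sub_apply, Matrix.smul_apply, Matrix.one_apply,
      smul_eq_mul]
    push_cast
    split_ifs <;> ring
  -- key: the upper-triangular entries of ∑ g p • X p are given by M.mulVec g
  have key : ∀ (g : PairIdx d → ℂ) (q : PairIdx d),
      (∑ p : PairIdx d, g p • Xmat d ε w p.1.1 p.1.2) q.1.1 q.1.2 = M.mulVec g q := by
    intro g q
    rw [Matrix.mulVec, dotProduct]
    rw [Matrix.sum_apply]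
    refine Finset.sum_congr rfl fun p _ => ?_
    obtain ⟨⟨m, n⟩, hmn⟩ := p
    obtain ⟨⟨a, b⟩, hab⟩ := q
    rw [Matrix.smul_apply, smul_eq_mul,
      Xmat_entry_eq d ε w a b m n hab hmn, hMentry]
    have hiff : ((⟨(a,b), hab⟩ : PairIdx d) = ⟨(m,n), hmn⟩) ↔ (a = m ∧ b = n) := by
      constructor
      · intro h
        injection h with h'
        exact ⟨congrArg Prod.fst h', congrArg Prod.snd h'⟩
      · rintro ⟨rfl, rfl⟩; rfl
    rw [if_congr hiff rfl rfl]
    ring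
  have bridge : ∀ g : PairIdx d → ℂ,
      (∑ p : PairIdx d, g p • Xmat d ε w p.1.1 p.1.2) = 0 ↔ M.mulVec g = 0 := by
    intro g
    constructor
    · intro h
      funext q
      rw [← key g q, h]
      simp
    · intro h
      ext j k
      rcases lt_trichotomy j k with hjk | hjk | hjk
      · have := key g ⟨(j, k), hjk⟩
        simp only [Matrix.zero_apply]
        rw [show (∑ p : PairIdx d, g p • Xmat d ε w p.1.1 p.1.2) j k
            = M.mulVec g ⟨(j, k), hjk⟩ from this, h, Pi.zero_apply]
      · subst hjk
        rw [Matrix.sum_apply, Matrix.zero_apply]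
        refine Finset.sum_eq_zero fun p _ => ?_
        rw [Matrix.smul_apply, Xmat_diag d ε w p.1.1 p.1.2 j p.2, smul_zero]
      · have hsum : (∑ p : PairIdx d, g p • Xmat d ε w p.1.1 p.1.2) j k
            = (ε : ℂ) * ((∑ p : PairIdx d, g p • Xmat d ε w p.1.1 p.1.2) k j) := by
          rw [Matrix.sum_apply, Matrix.sum_apply, Finset.mul_sum]
          refine Finset.sum_congr rfl fun p _ => ?_
          rw [Matrix.smul_apply, Matrix.smul_apply, smul_eq_mul, smul_eq_mul,
            Xmat_lower d ε hε w k j p.1.1 p.1.2 hjk p.2]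
          ring
        rw [hsum, key g ⟨(k, j), hjk⟩, h, Pi.zero_apply, mul_zero, Matrix.zero_apply]
  rw [Fintype.linearIndependent_iff, Ne, ← Matrix.exists_mulVec_eq_zero_iff (M := M)]
  push_neg
  constructor
  · intro h v hv hMv
    exact hv (funext (h v ((bridge v).mpr hMv)))
  · intro h g hg p
    by_contra hp
    exact h g (fun h0 => hp (congrFun h0 p)) ((bridge g).mp hg)

end
end

section
/- Let d ≥ 3 and let Ω⁺_d(0) be the d(d−1)/2 × d(d−1)/2 matrix indexed by P = {(m,n) : 1 ≤ m < n ≤ d} whose entry in row (m,n) and column (j,k) equals: 0 if (j,k) = (m,n); 1 if j = m and k ≠ n; 1 if k = m; 1 if k = n and j ≠ m; 1 if j = n; and 0 otherwise. Then the characteristic polynomial of Ω⁺_d(0) is (X − 2(d−2)) · (X − (d−4))^{d−1} · (X + 2)^{d(d−3)/2}; i.e., Ω⁺_d(0) has the non-degenerate eigenvalue 2(d−2), eigenvalue d−4 with algebraic multiplicity d−1, and eigenvalue −2 with algebraic multiplicity d(d−3)/2. -/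
open Matrix Polynomial

noncomputable section

/-- The matrix `Ω⁺_d(0)`, indexed by `P = {(m,n) : m < n}`: its entry in row `(m,n)` and
column `(j,k)` is `0` if `(j,k) = (m,n)`; `1` if `j = m` and `k ≠ n`; `1` if `k = m`;
`1` if `k = n` and `j ≠ m`; `1` if `j = n`; and `0` otherwise. -/
def OmegaPlus (d : ℕ) : Matrix (PairIdx d) (PairIdx d) ℂ :=
  Matrix.of fun r c =>
    if c.1.1 = r.1.1 ∧ c.1.2 = r.1.2 then 0
    else if c.1.1 = r.1.1 ∧ c.1.2 ≠ r.1.2 then 1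
    else if c.1.2 = r.1.1 then 1
    else if c.1.2 = r.1.2 ∧ c.1.1 ≠ r.1.1 then 1
    else if c.1.1 = r.1.2 then 1
    else 0

lemma eval_charpoly' {n : Type*} [Fintype n] [DecidableEq n] (M : Matrix n n ℂ) (z : ℂ) :
    M.charpoly.eval z = (z • (1 : Matrix n n ℂ) - M).det := by
  rw [Matrix.charpoly, ← coe_evalRingHom, RingHom.map_det]
  congr 1
  ext i j
  by_cases h : i = j <;>
    simp [h, charmatrix_apply, Matrix.diagonal_apply, Matrix.one_apply]

lemma key_det {m n : Type*} [Fintype m] [Fintype n] [DecidableEq m] [DecidableEq n]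
    (w : ℂ) (hw : w ≠ 0) (P : Matrix m n ℂ) (Q : Matrix n m ℂ) :
    w ^ (Fintype.card n) * (w • (1 : Matrix m m ℂ) - P * Q).det =
      w ^ (Fintype.card m) * (w • (1 : Matrix n n ℂ) - Q * P).det := by
  have h1 : (w • (1 : Matrix m m ℂ) - P * Q) = w • ((1 : Matrix m m ℂ) + P * (-(w⁻¹) • Q)) := by
    rw [smul_add, Matrix.mul_smul, smul_smul]
    field_simp
    rw [sub_eq_add_neg, neg_one_smul]
  have h2 : (w • (1 : Matrix n n ℂ) - Q * P) = w • ((1 : Matrix n n ℂ) + (-(w⁻¹) • Q) * P) := by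
    rw [smul_add, Matrix.smul_mul, smul_smul]
    field_simp
    rw [sub_eq_add_neg, neg_one_smul]
  rw [h1, h2, Matrix.det_smul, Matrix.det_smul, Matrix.det_one_add_mul_comm]
  ring

lemma card_PairIdx (d : ℕ) : 2 * Fintype.card (PairIdx d) + d = d * d := by
  rw [Fintype.card_subtype, Finset.card_filter]
  have key : ∀ q : Fin d × Fin d,
      ((if q.1 < q.2 then 1 else 0) + (if q.2 < q.1 then 1 else 0))
        + (if q.1 = q.2 then 1 else 0) = 1 := by
    intro q
    rcases lt_trichotomy q.1 q.2 with h | h | h <;>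
      simp [h, not_lt_of_gt, ne_of_lt, ne_of_gt, lt_irrefl] <;> omega
  have total : ∑ q : Fin d × Fin d, (((if q.1 < q.2 then 1 else 0)
      + (if q.2 < q.1 then 1 else 0)) + (if q.1 = q.2 then 1 else 0)) = d * d := by
    rw [Finset.sum_congr rfl (fun q _ => key q)]
    simp [Finset.card_univ]
  rw [Finset.sum_add_distrib, Finset.sum_add_distrib] at total
  have sym : ∑ q : Fin d × Fin d, (if q.2 < q.1 then 1 else 0)
      = ∑ q : Fin d × Fin d, (if q.1 < q.2 then 1 else 0) := by
    exact Equiv.sum_comp (Equiv.prodComm (Fin d) (Fin d)) (fun q => if q.1 < q.2 then 1 else 0)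
  have diag : ∑ q : Fin d × Fin d, (if q.1 = q.2 then 1 else 0) = d := by
    rw [Fintype.sum_prod_type]
    simp [Finset.sum_ite_eq', Finset.card_univ]
  rw [sym, diag] at total
  omega

def Kmat (d : ℕ) : Matrix (Fin d) (PairIdx d) ℂ :=
  Matrix.of fun x p => (if x = p.1.1 then 1 else 0) + (if x = p.1.2 then 1 else 0)

lemma delta_sum (d : ℕ) (a b : Fin d) :
    ∑ x : Fin d, (if x = a then (1:ℂ) else 0) * (if x = b then 1 else 0)
      = if a = b then 1 else 0 := by
  simp [ite_and, Finset.sum_ite_eq, eq_comm]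

lemma KKT (d : ℕ) :
    (Kmat d) * (Kmat d)ᵀ =
      ((d:ℂ) - 2) • (1 : Matrix (Fin d) (Fin d) ℂ) + Matrix.of (fun _ _ => (1:ℂ)) := by
  ext x y
  rw [Matrix.mul_apply]
  have step1 : ∑ p : PairIdx d, Kmat d x p * (Kmat d)ᵀ p y
      = ∑ q ∈ Finset.univ.filter (fun q : Fin d × Fin d => q.1 < q.2),
        (((if x = q.1 then (1:ℂ) else 0) + (if x = q.2 then 1 else 0)) *
         ((if y = q.1 then 1 else 0) + (if y = q.2 then 1 else 0))) := by
    rw [Finset.sum_subtype (p := fun q : Fin d × Fin d => q.1 < q.2) _ (fun q => by simp) (fun q : Fin d × Fin d =>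
        (((if x = q.1 then (1:ℂ) else 0) + (if x = q.2 then 1 else 0)) *
         ((if y = q.1 then 1 else 0) + (if y = q.2 then 1 else 0))))]
    exact Finset.sum_congr rfl (fun p _ => by simp [Kmat, Matrix.transpose_apply])
  rw [step1, Finset.sum_filter, Fintype.sum_prod_type]
  rcases eq_or_ne x y with rfl | hxy
  · have hpt : ∀ u v : Fin d, (if u < v then
        (((if x = u then (1:ℂ) else 0) + (if x = v then 1 else 0)) *
         ((if x = u then 1 else 0) + (if x = v then 1 else 0))) else 0)
        = (if x = u then (if u < v then (1:ℂ) else 0) else 0)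
          + (if x = v then (if u < v then (1:ℂ) else 0) else 0) := by
      intro u v
      simp only [Fin.lt_def, Fin.ext_iff]
      split_ifs
      all_goals try norm_num
      all_goals omega
    simp only [hpt, Finset.sum_add_distrib, Finset.sum_ite_eq, Finset.mem_univ, if_true]
    rw [Finset.sum_comm (γ := Fin d)]
    simp only [Finset.sum_ite_eq, Finset.mem_univ, if_true]
    rw [← Finset.sum_add_distrib]
    have hpt2 : ∀ w : Fin d, ((if x < w then (1:ℂ) else 0) + (if w < x then 1 else 0))
        = 1 - (if w = x then (1:ℂ) else 0) := by
      intro w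
      simp only [Fin.lt_def, Fin.ext_iff]
      split_ifs
      all_goals try norm_num
      all_goals omega
    rw [Finset.sum_congr rfl (fun w _ => hpt2 w), Finset.sum_sub_distrib]
    simp only [Finset.sum_const, Finset.card_univ, Fintype.card_fin, nsmul_eq_mul, mul_one,
      Finset.sum_ite_eq', Finset.mem_univ, if_true]
    simp [Matrix.one_apply]
    ring
  · have hpt : ∀ u v : Fin d, (if u < v then
        (((if x = u then (1:ℂ) else 0) + (if x = v then 1 else 0)) *
         ((if y = u then 1 else 0) + (if y = v then 1 else 0))) else 0)
        = (if x = u then (if u < v ∧ y = v then (1:ℂ) else 0) else 0)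
          + (if x = v then (if u < v ∧ y = u then (1:ℂ) else 0) else 0) := by
      intro u v
      have hxy' : (x:ℕ) ≠ (y:ℕ) := fun h => hxy (Fin.ext h)
      simp only [Fin.lt_def, Fin.ext_iff]
      split_ifs
      all_goals try norm_num
      all_goals omega
    simp only [hpt, Finset.sum_add_distrib, Finset.sum_ite_eq, Finset.mem_univ, if_true]
    rw [Finset.sum_comm (γ := Fin d)]
    simp only [Finset.sum_ite_eq, Finset.mem_univ, if_true]
    simp only [and_comm, ite_and, Finset.sum_ite_eq, Finset.mem_univ, if_true]
    rcases hxy.lt_or_gt with h | h <;>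
      simp [Matrix.one_apply, hxy, h, not_lt_of_gt h]

lemma factorizationA (d : ℕ) :
    OmegaPlus d = (Kmat d)ᵀ * (Kmat d) - (2 : ℂ) • (1 : Matrix (PairIdx d) (PairIdx d) ℂ) := by
  ext r c
  obtain ⟨⟨m, n⟩, hmn⟩ := r
  obtain ⟨⟨j, k⟩, hjk⟩ := c
  have hsum : ((Kmat d)ᵀ * (Kmat d)) ⟨(m,n), hmn⟩ ⟨(j,k), hjk⟩ =
      (if m = j then (1:ℂ) else 0) + (if m = k then 1 else 0)
      + ((if n = j then 1 else 0) + (if n = k then 1 else 0)) := by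
    simp only [Matrix.mul_apply, Matrix.transpose_apply, Kmat, Matrix.of_apply]
    simp only [add_mul, mul_add, Finset.sum_add_distrib, delta_sum]
    ring
  have hone : ((2:ℂ) • (1 : Matrix (PairIdx d) (PairIdx d) ℂ))
      (⟨(m,n), hmn⟩ : PairIdx d) ⟨(j,k), hjk⟩ = if m = j ∧ n = k then 2 else 0 := by
    simp [Matrix.one_apply, Subtype.ext_iff, Prod.ext_iff, ite_and]
  simp only [Matrix.sub_apply, hsum, hone, OmegaPlus, Matrix.of_apply]
  have hmn' : (m:ℕ) < n := hmn
  have hjk' : (j:ℕ) < k := hjk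
  simp only [Fin.ext_iff, ne_eq]
  split_ifs
  all_goals try norm_num
  all_goals omega


/-- For `d ≥ 3`, the characteristic polynomial of `Ω⁺_d(0)` is
`(X − 2(d−2)) (X − (d−4))^{d−1} (X + 2)^{d(d−3)/2}`. -/
theorem charpoly_OmegaPlus (d : ℕ) (hd : 3 ≤ d) :
    (OmegaPlus d).charpoly =
      (X - C (2 * ((d : ℂ) - 2))) * (X - C ((d : ℂ) - 4)) ^ (d - 1) *
        (X + C 2) ^ (d * (d - 3) / 2) := by
  -- arithmetic setup
  obtain ⟨k, hk⟩ : ∃ k, d * (d - 3) = 2 * k := by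
    rcases Nat.even_or_odd d with ⟨r, hr⟩ | ⟨r, hr⟩
    · exact ⟨r * (d - 3), by rw [hr]; ring⟩
    · refine ⟨d * (r - 1), ?_⟩
      have h3 : d - 3 = 2 * (r - 1) := by omega
      rw [h3]; ring
  have hk2 : d * (d - 3) / 2 = k := by omega
  have hN : Fintype.card (PairIdx d) = k + d := by
    have h1 := card_PairIdx d
    have h2 : d * d = d * (d - 3) + 3 * d := by
      have : d - 3 + 3 = d := by omega
      calc d * d = d * ((d - 3) + 3) := by rw [this]
        _ = d * (d - 3) + 3 * d := by ring
    omega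
  apply Polynomial.eq_of_infinite_eval_eq
  apply Set.Infinite.mono (s := ({-2, (d:ℂ) - 4} : Set ℂ)ᶜ)
  swap
  · exact Set.Finite.infinite_compl (Set.toFinite _)
  intro z hz
  simp only [Set.mem_compl_iff, Set.mem_insert_iff, Set.mem_singleton_iff, not_or] at hz
  obtain ⟨hz1, hz2⟩ := hz
  set w : ℂ := z + 2 with hw_def
  set v : ℂ := z - ((d:ℂ) - 4) with hv_def
  have hw : w ≠ 0 := by
    simp only [hw_def]; intro h; apply hz1; linear_combination h
  have hv : v ≠ 0 := by
    simp only [hv_def]; intro h; apply hz2; linear_combination h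
  simp only [Set.mem_setOf_eq]
  -- LHS evaluation
  have e0 : (OmegaPlus d).charpoly.eval z
      = (w • (1 : Matrix (PairIdx d) (PairIdx d) ℂ) - (Kmat d)ᵀ * (Kmat d)).det := by
    rw [eval_charpoly', factorizationA]
    congr 1
    rw [hw_def, add_smul]
    abel
  have e1 := key_det w hw (Kmat d)ᵀ (Kmat d)
  have e2 : w • (1 : Matrix (Fin d) (Fin d) ℂ) - (Kmat d) * (Kmat d)ᵀ
      = v • (1 : Matrix (Fin d) (Fin d) ℂ) - Matrix.of (fun _ _ => (1:ℂ)) := by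
    rw [KKT, hw_def, hv_def]
    have : (z + 2 : ℂ) = (z - ((d:ℂ) - 4)) + ((d:ℂ) - 2) := by ring
    rw [this, add_smul]
    abel
  -- rank-one step
  set u : Matrix (Fin d) (Fin 1) ℂ := Matrix.of (fun _ _ => (1:ℂ)) with hu_def
  have hJ : u * uᵀ = Matrix.of (fun _ _ => (1:ℂ)) := by
    ext a b; simp [hu_def, Matrix.mul_apply]
  have e3 := key_det v hv u uᵀ
  have huu : (v • (1 : Matrix (Fin 1) (Fin 1) ℂ) - uᵀ * u).det = v - d := by
    rw [Matrix.det_fin_one]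
    simp [hu_def, Matrix.mul_apply, Matrix.one_apply]
  simp only [Fintype.card_fin] at e3
  rw [hJ, huu, pow_one] at e3
  -- combine
  have hd1 : d - 1 + 1 = d := by omega
  have hvd : v ^ d = v * v ^ (d - 1) := by
    conv_lhs => rw [← hd1]
    rw [pow_succ]
    ring
  have e4 : (v • (1 : Matrix (Fin d) (Fin d) ℂ) - Matrix.of (fun _ _ => (1:ℂ))).det
      = v ^ (d - 1) * (v - (d:ℂ)) := by
    have h2 : v * (v • (1 : Matrix (Fin d) (Fin d) ℂ) - Matrix.of (fun _ _ => (1:ℂ))).det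
        = v * (v ^ (d - 1) * (v - (d:ℂ))) := by
      linear_combination e3 + (v - (d:ℂ)) * hvd
    exact mul_left_cancel₀ hv h2
  rw [Fintype.card_fin, hN, e2, e4] at e1
  -- e1 : w^d * det(w•1 - KᵀK) = w^(k+d) * (v^(d-1) * (v - d))
  have e5 : (OmegaPlus d).charpoly.eval z = w ^ k * (v ^ (d-1) * (v - (d:ℂ))) := by
    rw [e0]
    have hwd : (w:ℂ) ^ (k + d) = w ^ d * w ^ k := by rw [pow_add]; ring
    rw [hwd] at e1
    have := mul_left_cancel₀ (pow_ne_zero d hw) (by linear_combination e1 :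
      w ^ d * (w • (1 : Matrix (PairIdx d) (PairIdx d) ℂ) - (Kmat d)ᵀ * (Kmat d)).det
        = w ^ d * (w ^ k * (v ^ (d-1) * (v - (d:ℂ)))))
    exact this
  rw [e5, hk2]
  simp only [eval_mul, eval_pow, eval_sub, eval_add, eval_X, eval_C]
  have : v - (d:ℂ) = z - 2 * ((d:ℂ) - 2) := by rw [hv_def]; ring
  rw [this, hv_def, hw_def]
  ring

end
end
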